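/- Fix ε ∈ (0,1) and two finite-dimensional subspaces V₁, V₂ of a Hilbert space L. There exists a finite-dimensional subspace V of L such that V ⊆ {x : dist(x, Vᵢ) ≤ ε‖x‖} for i = 1, 2, and for all w ∈ L, dist(w, V) ≤ (3/ε)·max(dist(w, V₁), dist(w, V₂)). -/

import Mathlib

open Metric Set

open scoped RealInnerProductSpace

private theorem infDist_eq_norm_sub_orthProj
    {L : Type*} [NormedAddCommGroup L] [InnerProductSpace ℝ L] [CompleteSpace L]
    (K : Submodule ℝ L) [CompleteSpace K] (w : L) :
    infDist w (K : Set L) = ‖w - (Submodule.orthogonalProjectionOnto K w : L)‖ := by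
  refine le_antisymm ?_ ?_
  · simpa [dist_eq_norm] using
      infDist_le_dist_of_mem (Submodule.coe_mem (Submodule.orthogonalProjectionOnto K w))
  · rw [infDist_eq_iInf]
    refine le_ciInf fun y => ?_
    rw [dist_eq_norm, ← Submodule.starProjection_apply, Submodule.starProjection_minimal]
    exact ciInf_le ⟨0, by rintro _ ⟨x, rfl⟩; positivity⟩ y

private theorem le_of_sq_le_sq' {a b : ℝ} (_ha : 0 ≤ a) (hb : 0 ≤ b)
    (h : a ^ 2 ≤ b ^ 2) : a ≤ b := by
  nlinarith

set_option maxHeartbeats 1000000 in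
/-- **ε-intersections of finite-dimensional subspaces of a Hilbert space.**
Given `ε ∈ (0,1)` and finite-dimensional subspaces `V₁, V₂` of a Hilbert space `L`, there is a
finite-dimensional subspace `V` contained in the projective `ε`-thickening of each `Vᵢ`, such
that `dist(w, V) ≤ (3/ε) · max(dist(w, V₁), dist(w, V₂))` for every `w ∈ L`. -/
theorem exists_epsilon_intersection
    {L : Type*} [NormedAddCommGroup L] [InnerProductSpace ℝ L] [CompleteSpace L]
    (ε : ℝ) (hε : ε ∈ Set.Ioo (0 : ℝ) 1)
    (V₁ V₂ : Submodule ℝ L) (h₁ : FiniteDimensional ℝ V₁) (h₂ : FiniteDimensional ℝ V₂) :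
    ∃ V : Submodule ℝ L, FiniteDimensional ℝ V ∧
      (∀ x ∈ V, infDist x (V₁ : Set L) ≤ ε * ‖x‖) ∧
      (∀ x ∈ V, infDist x (V₂ : Set L) ≤ ε * ‖x‖) ∧
      ∀ w : L, infDist w (V : Set L) ≤
        (3 / ε) * max (infDist w (V₁ : Set L)) (infDist w (V₂ : Set L)) := by
  classical
  obtain ⟨hε0, hε1⟩ := hε
  haveI : CompleteSpace V₁ := FiniteDimensional.complete ℝ V₁
  haveI : CompleteSpace V₂ := FiniteDimensional.complete ℝ V₂
  -- the operator `T = P₁ ∘ P₂` restricted to `V₁`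
  let Tc : V₁ →L[ℝ] V₁ :=
    (Submodule.orthogonalProjectionOnto V₁).comp ((V₂.subtypeL.comp (Submodule.orthogonalProjectionOnto V₂)).comp V₁.subtypeL)
  let T : V₁ →ₗ[ℝ] V₁ := Tc.toLinearMap
  have hTapp : ∀ x : V₁, T x = Submodule.orthogonalProjectionOnto V₁ ((Submodule.orthogonalProjectionOnto V₂ (x : L) : L)) :=
    fun x => rfl
  have hT : T.IsSymmetric := by
    intro x y
    simp only [hTapp, Submodule.inner_orthogonalProjectionOnto_eq_of_mem_right,
      Submodule.inner_orthogonalProjectionOnto_eq_of_mem_left]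
    exact Submodule.inner_starProjection_left_eq_right V₂ _ _
  -- quadratic-form identities for `T`
  have fact1 : ∀ x : V₁, ⟪T x, x⟫ = ‖(Submodule.orthogonalProjectionOnto V₂ (x : L) : L)‖ ^ 2 := by
    intro x
    rw [hTapp, Submodule.inner_orthogonalProjectionOnto_eq_of_mem_right]
    have h0 : ⟪(x : L) - (Submodule.orthogonalProjectionOnto V₂ (x : L) : L),
        (Submodule.orthogonalProjectionOnto V₂ (x : L) : L)⟫ = 0 :=
      Submodule.starProjection_inner_eq_zero (K := V₂) _ _ (Submodule.coe_mem _)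
    rw [inner_sub_left] at h0
    rw [real_inner_comm]
    rw [real_inner_self_eq_norm_sq] at h0
    linarith
  have fact2 : ∀ x : V₁, ‖(x : L) - (Submodule.orthogonalProjectionOnto V₂ (x : L) : L)‖ ^ 2
      = ‖x‖ ^ 2 - ⟪T x, x⟫ := by
    intro x
    rw [fact1]
    have h0 : ⟪(x : L) - (Submodule.orthogonalProjectionOnto V₂ (x : L) : L),
        (Submodule.orthogonalProjectionOnto V₂ (x : L) : L)⟫ = 0 :=
      Submodule.starProjection_inner_eq_zero (K := V₂) _ _ (Submodule.coe_mem _)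
    have h2 := norm_sub_sq_real (x : L) (Submodule.orthogonalProjectionOnto V₂ (x : L) : L)
    rw [inner_sub_left, real_inner_self_eq_norm_sq] at h0
    rw [show ‖x‖ = ‖(x : L)‖ from rfl]
    linarith
  -- spectral decomposition
  set n := Module.finrank ℝ V₁ with hn
  set b := hT.eigenvectorBasis rfl with hb
  set μ := hT.eigenvalues (rfl : Module.finrank ℝ V₁ = n) with hμ
  have fact3 : ∀ x : V₁, ⟪T x, x⟫ = ∑ i, μ i * (b.repr x i) ^ 2 := by
    intro x
    rw [← b.repr.inner_map_map (T x) x, PiLp.inner_apply]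
    refine Finset.sum_congr rfl fun i _ => ?_
    rw [hT.eigenvectorBasis_apply_self_apply rfl x i]
    simp [RCLike.inner_apply]
    ring
  have fact4 : ∀ x : V₁, ‖x‖ ^ 2 = ∑ i, (b.repr x i) ^ 2 := by
    intro x
    rw [← real_inner_self_eq_norm_sq, ← b.repr.inner_map_map x x, PiLp.inner_apply]
    refine Finset.sum_congr rfl fun i _ => ?_
    simp [RCLike.inner_apply]
  have hμeq : ∀ i, μ i = ⟪T (b i), b i⟫ := by
    intro i
    rw [hT.apply_eigenvectorBasis rfl i, real_inner_smul_left, real_inner_self_eq_norm_sq,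
      b.orthonormal.1 i]
    simp
    rfl
  have hμ1 : ∀ i, μ i ≤ 1 := by
    intro i
    have h2 := fact2 (b i)
    have : (0 : ℝ) ≤ ‖(b i : L) - (Submodule.orthogonalProjectionOnto V₂ ((b i : V₁) : L) : L)‖ ^ 2 := by
      positivity
    have hb1 : ‖b i‖ = 1 := b.orthonormal.1 i
    rw [hμeq i]
    nlinarith [h2, hb1]
  -- the spectral subspace
  set I : Finset (Fin n) := Finset.univ.filter (fun i => 1 - ε ^ 2 ≤ μ i) with hI
  set V' : Submodule ℝ V₁ := Submodule.span ℝ (⇑b '' (I : Set (Fin n))) with hV'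
  have memI : ∀ y ∈ V', ∀ j ∉ I, b.repr y j = 0 := by
    intro y hy j hj
    rw [b.repr_apply_apply]
    induction hy using Submodule.span_induction with
    | mem z hz =>
        obtain ⟨i, hi, rfl⟩ := hz
        exact b.orthonormal.2 (fun h : j = i => hj (h ▸ hi))
    | zero => simp
    | add u v hu hv hu' hv' => rw [inner_add_right, hu', hv', add_zero]
    | smul a u hu hu' => rw [inner_smul_right, hu', mul_zero]
  have reprsum : ∀ (c : Fin n → ℝ) (j : Fin n),
      b.repr (∑ i ∈ I, c i • b i) j = if j ∈ I then c j else 0 := by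
    intro c j
    rw [map_sum]
    simp only [map_smul, b.repr_self]
    rw [WithLp.ofLp_sum, Finset.sum_apply]
    simp only [PiLp.smul_apply, EuclideanSpace.single_apply, smul_eq_mul]
    simp [Finset.sum_ite_eq' I j, mul_comm]
  have memsum : ∀ (c : Fin n → ℝ), (∑ i ∈ I, c i • b i) ∈ V' :=
    fun c => Submodule.sum_mem _ fun i hi => Submodule.smul_mem _ _
      (Submodule.subset_span ⟨i, hi, rfl⟩)
  refine ⟨V'.map V₁.subtype, ?_, ?_, ?_, ?_⟩
  · infer_instance
  · -- V is inside V₁, so distance to V₁ is 0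
    rintro x ⟨y, hy, rfl⟩
    simp only [Submodule.subtype_apply]
    rw [infDist_zero_of_mem (Submodule.coe_mem y)]
    positivity
  · -- points of V are ε-close to V₂
    rintro x ⟨y, hy, rfl⟩
    simp only [Submodule.subtype_apply]
    rw [infDist_eq_norm_sub_orthProj]
    have key : ‖(y : L) - (Submodule.orthogonalProjectionOnto V₂ (y : L) : L)‖ ^ 2 ≤ (ε * ‖(y : L)‖) ^ 2 := by
      rw [fact2 y, fact3 y, fact4 y, ← Finset.sum_sub_distrib,
        show ‖(y : L)‖ = ‖y‖ from rfl, mul_pow, fact4 y, Finset.mul_sum]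
      refine Finset.sum_le_sum fun i _ => ?_
      by_cases hiI : i ∈ I
      · have : 1 - ε ^ 2 ≤ μ i := by
          have := (Finset.mem_filter.1 hiI).2; exact this
        nlinarith [sq_nonneg (b.repr y i)]
      · rw [memI y hy i hiI]
        ring_nf
        positivity
    exact le_of_sq_le_sq' (norm_nonneg _) (by positivity) key
  · -- the distance bound
    intro w
    set d := max (infDist w (V₁ : Set L)) (infDist w (V₂ : Set L)) with hd
    have hd0 : 0 ≤ d := le_trans infDist_nonneg (le_max_left _ _)
    set v : V₁ := Submodule.orthogonalProjectionOnto V₁ w with hv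
    have hwv : ‖w - (v : L)‖ ≤ d :=
      le_trans (le_of_eq (infDist_eq_norm_sub_orthProj V₁ w).symm) (le_max_left _ _)
    set c : Fin n → ℝ := fun i => b.repr v i with hc
    set v' : V₁ := ∑ i ∈ I, c i • b i with hv'
    set v'' : V₁ := v - v' with hv''
    have hv'mem : v' ∈ V' := by rw [hv']; exact memsum c
    have hcv : ∀ i, c i = b.repr v i := fun i => rfl
    -- ‖v''‖² = ∑_{j ∉ I} c j²
    have hrepr'' : ∀ j, b.repr v'' j = if j ∈ I then 0 else c j := by
      intro j
      rw [hv'', map_sub]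
      have := reprsum c j
      rw [PiLp.sub_apply, this]
      by_cases hj : j ∈ I <;> simp [hj, hcv]
    clear_value v c v' v''
    -- dist of v to V₂ is at most 2d
    have hvV₂ : ‖(v : L) - (Submodule.orthogonalProjectionOnto V₂ (v : L) : L)‖ ≤ 2 * d := by
      have h1 : ‖(v : L) - (Submodule.orthogonalProjectionOnto V₂ (v : L) : L)‖
          ≤ ‖(v : L) - (Submodule.orthogonalProjectionOnto V₂ w : L)‖ := by
        rw [← infDist_eq_norm_sub_orthProj]
        simpa [dist_eq_norm] using
          infDist_le_dist_of_mem (Submodule.coe_mem (Submodule.orthogonalProjectionOnto V₂ w))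
      have h2 : ‖(v : L) - (Submodule.orthogonalProjectionOnto V₂ w : L)‖
          ≤ ‖(v : L) - w‖ + ‖w - (Submodule.orthogonalProjectionOnto V₂ w : L)‖ := by
        simpa using norm_sub_le_norm_sub_add_norm_sub (v : L) w _
      have h3 : ‖w - (Submodule.orthogonalProjectionOnto V₂ w : L)‖ ≤ d :=
        le_trans (le_of_eq (infDist_eq_norm_sub_orthProj V₂ w).symm) (le_max_right _ _)
      have h4 : ‖(v : L) - w‖ ≤ d := by rw [norm_sub_rev]; exact hwv
      linarith
    -- ε‖v''‖ ≤ 2d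
    have hv''le : ε * ‖v''‖ ≤ 2 * d := by
      refine le_of_sq_le_sq' (by positivity) (by positivity) ?_
      have hsq : (ε * ‖v''‖) ^ 2 ≤ ‖(v : L) - (Submodule.orthogonalProjectionOnto V₂ (v : L) : L)‖ ^ 2 := by
        rw [fact2 v, fact3 v, fact4 v, mul_pow, fact4 v'', ← Finset.sum_sub_distrib,
          Finset.mul_sum]
        refine Finset.sum_le_sum fun i _ => ?_
        rw [hrepr'' i]
        by_cases hiI : i ∈ I
        · simp only [hiI, if_true]
          have := hμ1 i
          nlinarith [sq_nonneg (b.repr v i)]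
        · simp only [hiI, if_false]
          rw [hcv i]
          have : ¬ (1 - ε ^ 2 ≤ μ i) := by
            intro h
            exact hiI (Finset.mem_filter.2 ⟨Finset.mem_univ i, h⟩)
          push_neg at this
          nlinarith [sq_nonneg (b.repr v i)]
      calc (ε * ‖v''‖) ^ 2 ≤ ‖(v : L) - (Submodule.orthogonalProjectionOnto V₂ (v : L) : L)‖ ^ 2 := hsq
        _ ≤ (2 * d) ^ 2 := by nlinarith [norm_nonneg ((v : L) - (Submodule.orthogonalProjectionOnto V₂ (v : L) : L))]
    -- conclude
    have hmem : ((v' : L)) ∈ (V'.map V₁.subtype : Set L) := ⟨v', hv'mem, rfl⟩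
    have step1 : infDist w ((V'.map V₁.subtype : Submodule ℝ L) : Set L) ≤ ‖w - (v' : L)‖ := by
      simpa [dist_eq_norm] using infDist_le_dist_of_mem hmem
    have step2 : ‖w - (v' : L)‖ ≤ ‖w - (v : L)‖ + ‖v''‖ := by
      have : ‖(v : L) - (v' : L)‖ = ‖v''‖ := by
        rw [hv'', Submodule.coe_norm, Submodule.coe_sub]
      calc ‖w - (v' : L)‖ ≤ ‖w - (v : L)‖ + ‖(v : L) - (v' : L)‖ := by
            simpa using norm_sub_le_norm_sub_add_norm_sub w (v : L) (v' : L)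
        _ = ‖w - (v : L)‖ + ‖v''‖ := by rw [this]
    have hv''d : ‖v''‖ ≤ 2 * d / ε := by
      rw [le_div_iff₀ hε0]
      linarith [hv''le, mul_comm ε ‖v''‖]
    have final : d + 2 * d / ε ≤ 3 / ε * d := by
      rw [div_mul_eq_mul_div, le_div_iff₀ hε0, add_mul, div_mul_cancel₀ _ (ne_of_gt hε0)]
      nlinarith
    calc infDist w ((V'.map V₁.subtype : Submodule ℝ L) : Set L)
        ≤ ‖w - (v : L)‖ + ‖v''‖ := le_trans step1 step2
      _ ≤ d + 2 * d / ε := by linarith [hwv, hv''d]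
      _ ≤ 3 / ε * d := final
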